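/- arXiv:0908.2353 — 6 statements merged into one kernel-verified Lean document; each statement's English description precedes it below -/
import Mathlib

section
/- Let g₁ and g₀ be Lie algebras over a field k of characteristic 0, let s, t : g₁ → g₀ and i : g₀ → g₁ be Lie algebra homomorphisms with s ∘ i = id and t ∘ i = id, and let m be a map from the fiber product {(f,g) ∈ g₁ × g₁ : t(f) = s(g)} (a Lie subalgebra of g₁ × g₁ with componentwise bracket) to g₁ which is a Lie algebra homomorphism and satisfies the unit laws m(i(s(g)), g) = g and m(f, i(t(f))) = f for all f, g ∈ g₁. Then [x, y] = 0 for every x ∈ ker(s) and every y ∈ ker(t). -/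
/-- In a strict Lie 2-algebra, the kernel of the source map and the kernel of the
target map commute: `[ker s, ker t] = 0`. -/
theorem lie2alg_ker_s_ker_t_commute
    (k : Type*) [Field k] [CharZero k]
    (g₀ g₁ : Type*) [LieRing g₀] [LieAlgebra k g₀] [LieRing g₁] [LieAlgebra k g₁]
    (s t : g₁ →ₗ⁅k⁆ g₀) (i : g₀ →ₗ⁅k⁆ g₁)
    (hsi : ∀ n, s (i n) = n) (hti : ∀ n, t (i n) = n)
    (m : g₁ → g₁ → g₁)
    -- `m` is additive on the fiber product
    (hm_add : ∀ f₁ g₁' f₂ g₂ : g₁, t f₁ = s g₁' → t f₂ = s g₂ →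
      m (f₁ + f₂) (g₁' + g₂) = m f₁ g₁' + m f₂ g₂)
    -- `m` is homogeneous on the fiber product
    (hm_smul : ∀ (c : k) (f g : g₁), t f = s g → m (c • f) (c • g) = c • m f g)
    -- `m` preserves the (componentwise) Lie bracket on the fiber product
    (hm_bracket : ∀ f₁ g₁' f₂ g₂ : g₁, t f₁ = s g₁' → t f₂ = s g₂ →
      m ⁅f₁, f₂⁆ ⁅g₁', g₂⁆ = ⁅m f₁ g₁', m f₂ g₂⁆)
    -- unit laws of the categorical composition
    (hm_unit_left : ∀ g : g₁, m (i (s g)) g = g)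
    (hm_unit_right : ∀ f : g₁, m f (i (t f)) = f) :
    ∀ x y : g₁, s x = 0 → t y = 0 → ⁅x, y⁆ = 0 := by
  intro x y hx hy
  have hx0 : m 0 x = x := by
    have := hm_unit_left x
    rwa [hx, map_zero i] at this
  have hy0 : m y 0 = y := by
    have := hm_unit_right y
    rwa [hy, map_zero i] at this
  have h00 : m 0 0 = (0 : g₁) := by
    have := hm_smul 0 0 0 (by simp)
    simpa using this
  calc ⁅x, y⁆ = ⁅m 0 x, m y 0⁆ := by rw [hx0, hy0]
    _ = m ⁅(0 : g₁), y⁆ ⁅x, (0 : g₁)⁆ := by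
        rw [hm_bracket 0 x y 0 (by simp [hx]) (by simp [hy])]
    _ = 0 := by simpa using h00
end

section
/- Let G₁ and G₀ be groups, let s, t : G₁ → G₀ and i : G₀ → G₁ be group homomorphisms with s ∘ i = id and t ∘ i = id, and suppose the map m(f,g) := f · i(t(f))⁻¹ · g on the fiber product {(f,g) : t(f) = s(g)} is a group homomorphism with respect to componentwise multiplication. Set M := ker(s), μ := t restricted to M, and for n ∈ G₀ and x ∈ M set ⁿx := i(n) · x · i(n)⁻¹. Then: (1) ⁿx ∈ M, and (x,n) ↦ ⁿx is an action of G₀ on M by group automorphisms; (2) μ(ⁿx) = n · μ(x) · n⁻¹ for all n ∈ G₀, x ∈ M; (3) ^{μ(x)}x' = x · x' · x⁻¹ for all x, x' ∈ M. In other words, μ : M → G₀ with this action is a crossed module of groups. -/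
/-- From a strict 2-group one obtains a crossed module of groups:
`μ := t|_{ker s} : ker s → G₀` with the action `ⁿx := i n * x * (i n)⁻¹`. -/
theorem twoGroup_gives_crossedModule
    (G₀ G₁ : Type*) [Group G₀] [Group G₁]
    (s t : G₁ →* G₀) (i : G₀ →* G₁)
    (hsi : ∀ n, s (i n) = n) (hti : ∀ n, t (i n) = n)
    (hm_mul : ∀ f₁ g₁ f₂ g₂ : G₁, t f₁ = s g₁ → t f₂ = s g₂ →
      (f₁ * f₂) * (i (t (f₁ * f₂)))⁻¹ * (g₁ * g₂)
        = (f₁ * (i (t f₁))⁻¹ * g₁) * (f₂ * (i (t f₂))⁻¹ * g₂)) :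
    -- (1) the action is well defined on M := ker s …
    (∀ (n : G₀) (x : G₁), s x = 1 → s (i n * x * (i n)⁻¹) = 1) ∧
    -- … it is an action …
    (∀ (n n' : G₀) (x : G₁), i (n * n') * x * (i (n * n'))⁻¹
        = i n * (i n' * x * (i n')⁻¹) * (i n)⁻¹) ∧
    (∀ x : G₁, i (1 : G₀) * x * (i (1 : G₀))⁻¹ = x) ∧
    -- … by group automorphisms
    (∀ (n : G₀) (x x' : G₁), i n * (x * x') * (i n)⁻¹
        = (i n * x * (i n)⁻¹) * (i n * x' * (i n)⁻¹)) ∧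
    -- (2) equivariance axiom: μ(ⁿx) = n · μ(x) · n⁻¹
    (∀ (n : G₀) (x : G₁), s x = 1 → t (i n * x * (i n)⁻¹) = n * t x * n⁻¹) ∧
    -- (3) Peiffer identity: ^{μ(x)}x' = x · x' · x⁻¹
    (∀ x x' : G₁, s x = 1 → s x' = 1 → i (t x) * x' * (i (t x))⁻¹ = x * x' * x⁻¹) := by
  refine ⟨?_, ?_, ?_, ?_, ?_, ?_⟩
  · intro n x hx
    simp [map_mul, hsi, hx]
  · intro n n' x
    simp [map_mul, mul_assoc]
  · intro x
    simp
  · intro n x x'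
    group
  · intro n x hx
    simp [map_mul, hti]
  · intro x x' hx hx'
    have htu : t ((i (t x))⁻¹ * x) = 1 := by simp [map_mul, hti]
    have hcomm := hm_mul 1 x' ((i (t x))⁻¹ * x) 1 (by simp [hx']) (by simp [htu])
    simp only [one_mul, mul_one, htu, map_one, inv_one, map_mul] at hcomm
    have h : (i (t x))⁻¹ * x * x' = x' * ((i (t x))⁻¹ * x) := by
      simpa using hcomm
    calc i (t x) * x' * (i (t x))⁻¹
        = i (t x) * (x' * ((i (t x))⁻¹ * x)) * x⁻¹ := by group
      _ = i (t x) * ((i (t x))⁻¹ * x * x') * x⁻¹ := by rw [h]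
      _ = x * x' * x⁻¹ := by group
end

section
/- Let μ : M → N with action φ : N → Aut(M) (written ⁿm := φ(n)(m)) be a crossed module of groups, and let G₁ := M ⋊_φ N with s(m,n) = n, t(m,n) = μ(m)·n, i(n) = (1,n). Define the composition c(f,g) := f · i(t(f))⁻¹ · g for composable pairs f, g ∈ G₁ with t(f) = s(g). Then c is a group homomorphism on the fiber product: for all f₁, f₂, g₁, g₂ ∈ G₁ with t(f₁) = s(g₁) and t(f₂) = s(g₂), one has c(f₁·f₂, g₁·g₂) = c(f₁,g₁) · c(f₂,g₂). (This middle-four exchange property uses the Peiffer identity ^{μ(m)}m' = m·m'·m⁻¹.) -/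
/-- For a crossed module of groups `μ : M → N` with action `φ`, the composition
`c f g := f * (i (t f))⁻¹ * g` on the 2-group `M ⋊[φ] N` (with `s (m,n) = n`,
`t (m,n) = μ m * n`, `i n = (1,n)`) satisfies the middle-four exchange property,
i.e. it is a group homomorphism on the fiber product. -/
theorem crossedModule_composition_is_hom
    (M N : Type*) [Group M] [Group N]
    (μ : M →* N) (φ : N →* MulAut M)
    (ha : ∀ (n : N) (m : M), μ (φ n m) = n * μ m * n⁻¹)
    (hb : ∀ m m' : M, φ (μ m) m' = m * m' * m⁻¹) :
    ∀ f₁ f₂ g₁ g₂ : M ⋊[φ] N,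
      μ f₁.left * f₁.right = g₁.right →
      μ f₂.left * f₂.right = g₂.right →
      (f₁ * f₂) * ((⟨1, μ (f₁ * f₂).left * (f₁ * f₂).right⟩ : M ⋊[φ] N))⁻¹ * (g₁ * g₂)
        = (f₁ * ((⟨1, μ f₁.left * f₁.right⟩ : M ⋊[φ] N))⁻¹ * g₁) *
          (f₂ * ((⟨1, μ f₂.left * f₂.right⟩ : M ⋊[φ] N))⁻¹ * g₂) := by
  rintro ⟨m₁, n₁⟩ ⟨m₂, n₂⟩ ⟨p₁, q₁⟩ ⟨p₂, q₂⟩ h₁ h₂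
  simp only at h₁ h₂
  subst h₁ h₂
  have key : ∀ (m : M) (n : N) (p : M), φ (μ m * n) p = m * φ n p * m⁻¹ := by
    intro m n p
    rw [map_mul, MulAut.mul_apply, hb]
  have hb' : ∀ (m x : M), (φ (μ m))⁻¹ x = m⁻¹ * x * m := by
    intro m x
    have : (φ (μ m))⁻¹ = φ (μ m⁻¹) := by rw [map_inv, map_inv]
    rw [this, hb]; group
  ext <;>
    simp [SemidirectProduct.ext_iff, SemidirectProduct.mul_left,
      SemidirectProduct.mul_right, SemidirectProduct.inv_left,
      SemidirectProduct.inv_right, key, hb', ha, map_mul, map_inv, mul_assoc,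
      MulAut.apply_inv_self, mul_inv_cancel_left] <;>
    rw [hb] <;> group
end

section
/- Let g₁ and g₀ be Lie algebras over a field k of characteristic 0, let s, t : g₁ → g₀ and i : g₀ → g₁ be Lie algebra homomorphisms with s ∘ i = id and t ∘ i = id, and suppose the map m(f,g) := f + g − i(t(f)), defined on the fiber product {(f,g) ∈ g₁ × g₁ : t(f) = s(g)}, is a Lie algebra homomorphism with respect to the componentwise bracket. Set 𝔪 := ker(s), μ := t restricted to 𝔪, and for n ∈ g₀ and x ∈ 𝔪 set n·x := [i(n), x] (bracket in g₁). Then: (1) n·x ∈ 𝔪, and (n,x) ↦ n·x is an action of g₀ on 𝔪 by derivations of the Lie bracket of 𝔪; (2) μ(n·x) = [n, μ(x)] for all n ∈ g₀, x ∈ 𝔪; (3) μ(x)·x' = [x, x'] for all x, x' ∈ 𝔪. In other words, μ : 𝔪 → g₀ with this action is a crossed module of Lie algebras. -/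
/-- From a strict Lie 2-algebra (with composition `m f g = f + g - i (t f)` a Lie
algebra homomorphism on composable pairs) one obtains a crossed module of Lie
algebras: `μ := t|_{ker s} : ker s → g₀` with the action `n·x := ⁅i n, x⁆`. -/
theorem lie2alg_gives_crossedModule
    (k : Type*) [Field k] [CharZero k]
    (g₀ g₁ : Type*) [LieRing g₀] [LieAlgebra k g₀] [LieRing g₁] [LieAlgebra k g₁]
    (s t : g₁ →ₗ⁅k⁆ g₀) (i : g₀ →ₗ⁅k⁆ g₁)
    (hsi : ∀ n, s (i n) = n) (hti : ∀ n, t (i n) = n)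
    (hm_bracket : ∀ f₁ g₁' f₂ g₂ : g₁, t f₁ = s g₁' → t f₂ = s g₂ →
      ⁅f₁, f₂⁆ + ⁅g₁', g₂⁆ - i (t ⁅f₁, f₂⁆)
        = ⁅f₁ + g₁' - i (t f₁), f₂ + g₂ - i (t f₂)⁆) :
    -- (1) the action preserves 𝔪 := ker s …
    (∀ (n : g₀) (x : g₁), s x = 0 → s ⁅i n, x⁆ = 0) ∧
    -- … it is a Lie algebra action …
    (∀ (n n' : g₀) (x : g₁), s x = 0 →
      ⁅i ⁅n, n'⁆, x⁆ = ⁅i n, ⁅i n', x⁆⁆ - ⁅i n', ⁅i n, x⁆⁆) ∧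
    -- … by derivations of the bracket of 𝔪
    (∀ (n : g₀) (x x' : g₁), s x = 0 → s x' = 0 →
      ⁅i n, ⁅x, x'⁆⁆ = ⁅⁅i n, x⁆, x'⁆ + ⁅x, ⁅i n, x'⁆⁆) ∧
    -- (2) equivariance axiom: μ(n·x) = ⁅n, μ(x)⁆
    (∀ (n : g₀) (x : g₁), s x = 0 → t ⁅i n, x⁆ = ⁅n, t x⁆) ∧
    -- (3) Peiffer identity: μ(x)·x' = ⁅x, x'⁆
    (∀ x x' : g₁, s x = 0 → s x' = 0 → ⁅i (t x), x'⁆ = ⁅x, x'⁆) := by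
  refine ⟨fun n x hx => ?_, fun n n' x _ => ?_, fun n x x' _ _ => ?_,
    fun n x _ => ?_, fun x x' hx hx' => ?_⟩
  · rw [LieHom.map_lie, hsi, hx, lie_zero]
  · rw [LieHom.map_lie]
    rw [lie_lie]
  · rw [leibniz_lie]
  · rw [LieHom.map_lie, hti]
  · have h := hm_bracket x (i (t x)) 0 x' (by rw [hsi]) (by rw [map_zero, hx'])
    simp only [lie_zero, zero_lie, map_zero, add_zero, zero_add,
      sub_zero, add_sub_cancel_right] at h
    exact h
end

section
/- Let K and L be Hopf algebras over a field k of characteristic 0 and let ρ : L → K ⊗ L be a k-algebra homomorphism which is a coassociative counital left coaction ((id_K ⊗ ρ) ∘ ρ = (Δ_K ⊗ id_L) ∘ ρ, (ε_K ⊗ id_L) ∘ ρ = id_L). Suppose in addition that Δ_L is a morphism of K-comodules: (id_K ⊗ Δ_L) ∘ ρ = ρ_{L⊗L} ∘ Δ_L, where ρ_{L⊗L} := (μ_K ⊗ id_L ⊗ id_L) ∘ (id_K ⊗ τ_{L,K} ⊗ id_L) ∘ (ρ ⊗ ρ). Then the action ⋆_ρ of χ(K) on χ(L), given by η ⋆_ρ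 φ := μ_k ∘ (η ⊗ φ) ∘ ρ, is an action by group automorphisms of the character group (χ(L), ⋆): for every character η of K and all characters φ, ψ of L, η ⋆_ρ (φ ⋆ ψ) = (η ⋆_ρ φ) ⋆ (η ⋆_ρ ψ), where φ ⋆ ψ = μ_k ∘ (φ ⊗ ψ) ∘ Δ_L. -/
open TensorProduct

/-- The convolution product `φ ⋆ ψ := μ_k ∘ (φ ⊗ ψ) ∘ Δ` of linear functionals on
a bialgebra. -/
noncomputable def hopfConv {k L : Type*} [CommRing k] [Ring L] [Bialgebra k L]
    (φ ψ : L →ₗ[k] k) : L →ₗ[k] k :=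
  LinearMap.mul' k k ∘ₗ TensorProduct.map φ ψ ∘ₗ Coalgebra.comul

/-- The pairing `η ⋆_ρ φ := μ_k ∘ (η ⊗ φ) ∘ ρ` along a coaction `ρ : L → K ⊗ L`. -/
noncomputable def coactConv {k K L : Type*} [CommRing k] [Ring K] [Bialgebra k K]
    [Ring L] [Bialgebra k L] (ρ : L →ₐ[k] K ⊗[k] L)
    (η : K →ₗ[k] k) (φ : L →ₗ[k] k) : L →ₗ[k] k :=
  LinearMap.mul' k k ∘ₗ TensorProduct.map η φ ∘ₗ ρ.toLinearMap

set_option synthInstance.maxHeartbeats 1000000 in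
set_option maxHeartbeats 1000000 in
/-- If `(L, ρ)` is a left `K`-comodule algebra and additionally a left `K`-comodule
coalgebra (`Δ_L` is a morphism of `K`-comodules), then the action `⋆_ρ` of `χ(K)`
on `χ(L)` is an action by group automorphisms of the character group `(χ(L), ⋆)`. -/
theorem comodule_coalgebra_action_by_automorphisms
    (k : Type*) [Field k] [CharZero k]
    (K : Type*) [Ring K] [HopfAlgebra k K]
    (L : Type*) [Ring L] [HopfAlgebra k L]
    (ρ : L →ₐ[k] K ⊗[k] L)
    -- coassociativity: (id_K ⊗ ρ) ∘ ρ = (Δ_K ⊗ id_L) ∘ ρ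
    (h_coassoc : ∀ x : L,
      (TensorProduct.map LinearMap.id ρ.toLinearMap) (ρ x)
        = (TensorProduct.assoc k K K L)
            ((TensorProduct.map (Coalgebra.comul (R := k)) LinearMap.id) (ρ x)))
    -- counitality: (ε_K ⊗ id_L) ∘ ρ = id_L
    (h_counit : ∀ x : L,
      (TensorProduct.lid k L)
        ((TensorProduct.map (Coalgebra.counit (R := k)) LinearMap.id) (ρ x)) = x)
    -- `Δ_L` is a morphism of `K`-comodules:
    -- (id_K ⊗ Δ_L) ∘ ρ = (μ_K ⊗ id ⊗ id) ∘ (id ⊗ τ ⊗ id) ∘ (ρ ⊗ ρ) ∘ Δ_L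
    (h_comod_coalg : ∀ x : L,
      (TensorProduct.map LinearMap.id (Coalgebra.comul (R := k))) (ρ x)
        = (TensorProduct.map (LinearMap.mul' k K) LinearMap.id)
            ((TensorProduct.tensorTensorTensorComm k K L K L)
              ((TensorProduct.map ρ.toLinearMap ρ.toLinearMap)
                (Coalgebra.comul (R := k) x)))) :
    ∀ (η : K →ₐ[k] k) (φ ψ : L →ₐ[k] k),
      coactConv ρ η.toLinearMap (hopfConv φ.toLinearMap ψ.toLinearMap)
        = hopfConv (coactConv ρ η.toLinearMap φ.toLinearMap)
            (coactConv ρ η.toLinearMap ψ.toLinearMap) := by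

  intro η φ ψ
  ext x
  -- Key pointwise claim on K ⊗ L pairs
  have key : ∀ (u v : K ⊗[k] L),
      LinearMap.mul' k k
        ((TensorProduct.map η.toLinearMap
            (LinearMap.mul' k k ∘ₗ TensorProduct.map φ.toLinearMap ψ.toLinearMap))
          ((TensorProduct.map (LinearMap.mul' k K) LinearMap.id)
            ((TensorProduct.tensorTensorTensorComm k K L K L) (u ⊗ₜ[k] v))))
        = (LinearMap.mul' k k ((TensorProduct.map η.toLinearMap φ.toLinearMap) u))
          * (LinearMap.mul' k k ((TensorProduct.map η.toLinearMap ψ.toLinearMap) v)) := by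
    intro u v
    induction u using TensorProduct.induction_on with
    | zero => simp
    | tmul p q =>
      induction v using TensorProduct.induction_on with
      | zero => simp
      | tmul r s =>
        simp [TensorProduct.tensorTensorTensorComm_tmul, LinearMap.mul'_apply, map_mul]
        ring
      | add v₁ v₂ h₁ h₂ =>
        simp only [TensorProduct.tmul_add, map_add, h₁, h₂, add_mul, mul_add]
    | add u₁ u₂ h₁ h₂ =>
      simp only [TensorProduct.add_tmul, map_add, h₁, h₂, add_mul, mul_add]
  -- main claim for elements of L ⊗ L
  have main : ∀ c : L ⊗[k] L,
      LinearMap.mul' k k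
        ((TensorProduct.map η.toLinearMap
            (LinearMap.mul' k k ∘ₗ TensorProduct.map φ.toLinearMap ψ.toLinearMap))
          ((TensorProduct.map (LinearMap.mul' k K) LinearMap.id)
            ((TensorProduct.tensorTensorTensorComm k K L K L)
              ((TensorProduct.map ρ.toLinearMap ρ.toLinearMap) c))))
        = LinearMap.mul' k k
            ((TensorProduct.map (coactConv ρ η.toLinearMap φ.toLinearMap)
                (coactConv ρ η.toLinearMap ψ.toLinearMap)) c) := by
    intro c
    induction c using TensorProduct.induction_on with
    | zero => simp
    | tmul a b =>
      simpa [coactConv, LinearMap.mul'_apply] using key (ρ a) (ρ b)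
    | add c₁ c₂ h₁ h₂ =>
      simp only [map_add, h₁, h₂]
  -- rewrite the left side using h_comod_coalg
  have lhs_eq :
      coactConv ρ η.toLinearMap (hopfConv φ.toLinearMap ψ.toLinearMap) x
        = LinearMap.mul' k k
            ((TensorProduct.map η.toLinearMap
                (LinearMap.mul' k k ∘ₗ TensorProduct.map φ.toLinearMap ψ.toLinearMap))
              ((TensorProduct.map LinearMap.id (Coalgebra.comul (R := k))) (ρ x))) := by
    have hmaps : TensorProduct.map η.toLinearMap
          (LinearMap.mul' k k ∘ₗ TensorProduct.map φ.toLinearMap ψ.toLinearMap)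
        ∘ₗ TensorProduct.map LinearMap.id (Coalgebra.comul (R := k))
        = TensorProduct.map η.toLinearMap
            (LinearMap.mul' k k ∘ₗ TensorProduct.map φ.toLinearMap ψ.toLinearMap
              ∘ₗ Coalgebra.comul) := by
      rw [← TensorProduct.map_comp, LinearMap.comp_id, LinearMap.comp_assoc]
    simp only [coactConv, hopfConv, LinearMap.comp_apply]
    rw [← hmaps]
    simp [LinearMap.comp_apply]
  rw [lhs_eq, h_comod_coalg x, main (Coalgebra.comul (R := k) x)]
  simp [hopfConv]
end

section
/- Let K and L be Hopf algebras over a field k of characteristic 0, let ζ : K → L be a bialgebra homomorphism, and let ρ : L → K ⊗ L be a k-algebra homomorphism which is a coassociative counital left coaction. Suppose the crossed comodule condition (ii) holds: ρ ∘ ζ = (id_K ⊗ ζ) ∘ coad_K, where coad_K := (μ_K ⊗ id_K) ∘ (id_K ⊗ τ_{K,K}) ∘ (Δ_K ⊗ S_K) ∘ Δ_K. Then for every character η of K and every character ψ of L one has (η ⋆_ρ ψ) ∘ ζ = η ⋆ (ψ ∘ ζ) ⋆ (η ∘ S_K) in χ(K), where η ⋆_ρ ψ := μ_k ∘ (η ⊗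 ψ) ∘ ρ and ⋆ is convolution in χ(K). That is, writing μ := (− ∘ ζ) : χ(L) → χ(K), the crossed module axiom (a) μ(η ⋆_ρ ψ) = η ⋆ μ(ψ) ⋆ η⁻¹ holds. -/
open TensorProduct

/-- The adjoint coaction `coad_K = (μ_K ⊗ id) ∘ (id ⊗ τ) ∘ (Δ_K ⊗ S_K) ∘ Δ_K`. -/
noncomputable def hopfCoad {k K : Type*} [CommRing k] [Ring K] [HopfAlgebra k K] :
    K →ₗ[k] K ⊗[k] K :=
  TensorProduct.map (LinearMap.mul' k K) LinearMap.id
    ∘ₗ (TensorProduct.assoc k K K K).symm.toLinearMap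
    ∘ₗ TensorProduct.map LinearMap.id (TensorProduct.comm k K K).toLinearMap
    ∘ₗ (TensorProduct.assoc k K K K).toLinearMap
    ∘ₗ TensorProduct.map Coalgebra.comul (HopfAlgebra.antipode (R := k))
    ∘ₗ Coalgebra.comul

/-- Condition (ii) of a crossed comodule of Hopf algebras
(`ρ ∘ ζ = (id_K ⊗ ζ) ∘ coad_K`) yields, on characters, the crossed module
axiom (a): `(η ⋆_ρ ψ) ∘ ζ = η ⋆ (ψ ∘ ζ) ⋆ (η ∘ S_K) = η ⋆ μ(ψ) ⋆ η⁻¹` in `χ(K)`. -/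
theorem crossedComodule_condition_ii_on_characters
    (k : Type*) [Field k] [CharZero k]
    (K : Type*) [Ring K] [HopfAlgebra k K]
    (L : Type*) [Ring L] [HopfAlgebra k L]
    (ζ : K →ₐc[k] L)
    (ρ : L →ₐ[k] K ⊗[k] L)
    -- coassociativity: (id_K ⊗ ρ) ∘ ρ = (Δ_K ⊗ id_L) ∘ ρ
    (h_coassoc : ∀ x : L,
      (TensorProduct.map LinearMap.id ρ.toLinearMap) (ρ x)
        = (TensorProduct.assoc k K K L)
            ((TensorProduct.map (Coalgebra.comul (R := k)) LinearMap.id) (ρ x)))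
    -- counitality: (ε_K ⊗ id_L) ∘ ρ = id_L
    (h_counit : ∀ x : L,
      (TensorProduct.lid k L)
        ((TensorProduct.map (Coalgebra.counit (R := k)) LinearMap.id) (ρ x)) = x)
    -- condition (ii): ρ ∘ ζ = (id_K ⊗ ζ) ∘ coad_K
    (h_ii : ∀ x : K,
      ρ (ζ x) = (TensorProduct.map LinearMap.id (ζ : K →ₗ[k] L)) (hopfCoad x)) :
    ∀ (η : K →ₐ[k] k) (ψ : L →ₐ[k] k),
      (coactConv ρ η.toLinearMap ψ.toLinearMap) ∘ₗ (ζ : K →ₗ[k] L)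
        = hopfConv
            (hopfConv η.toLinearMap (ψ.toLinearMap ∘ₗ (ζ : K →ₗ[k] L)))
            (η.toLinearMap ∘ₗ HopfAlgebra.antipode (R := k)) := by
  intro η ψ
  apply LinearMap.ext
  intro x
  have key : ∀ a b : K,
      (LinearMap.mul' k k) (TensorProduct.map η.toLinearMap ψ.toLinearMap
        (TensorProduct.map LinearMap.id (ζ : K →ₗ[k] L)
          ((TensorProduct.map (LinearMap.mul' k K) LinearMap.id)
            ((TensorProduct.assoc k K K K).symm
              ((TensorProduct.map LinearMap.id (TensorProduct.comm k K K).toLinearMap)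
                ((TensorProduct.assoc k K K K)
                  ((Coalgebra.comul (R := k) a) ⊗ₜ[k] (HopfAlgebra.antipode (R := k) b))))))))
        = hopfConv η.toLinearMap (ψ.toLinearMap ∘ₗ (ζ : K →ₗ[k] L)) a
            * η (HopfAlgebra.antipode (R := k) b) := by
    intro a b
    obtain ⟨t, ht⟩ := TensorProduct.exists_finset (Coalgebra.comul (R := k) a)
    rw [hopfConv]
    simp only [LinearMap.comp_apply]
    rw [ht]
    set_option synthInstance.maxHeartbeats 1000000 in
    simp only [TensorProduct.sum_tmul, map_sum, Finset.sum_mul]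
    refine Finset.sum_congr rfl fun q _ => ?_
    simp only [TensorProduct.assoc_tmul, TensorProduct.map_tmul, LinearMap.id_apply,
      LinearEquiv.coe_coe, TensorProduct.comm_tmul, TensorProduct.assoc_symm_tmul,
      LinearMap.mul'_apply, LinearMap.comp_apply, AlgHom.toLinearMap_apply, map_mul]
    ring
  obtain ⟨s, hs⟩ := TensorProduct.exists_finset (Coalgebra.comul (R := k) x)
  simp only [LinearMap.comp_apply, coactConv, AlgHom.toLinearMap_apply, BialgHom.coe_toLinearMap]
  have hx : ρ ((ζ : K →ₗ[k] L) x)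
      = (TensorProduct.map LinearMap.id (ζ : K →ₗ[k] L)) (hopfCoad x) := h_ii x
  rw [h_ii x, hopfCoad]
  conv_rhs => rw [hopfConv]
  simp only [LinearMap.comp_apply]
  rw [hs]
  set_option synthInstance.maxHeartbeats 1000000 in
  simp only [map_sum, TensorProduct.map_tmul]
  refine Finset.sum_congr rfl fun p _ => ?_
  simpa using key p.1 p.2
end
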